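/- Let 0 ≤ p < p_W < 1/2. For q ∈ [0,1] define the binary convolution q⋆α := q(1−α) + (1−q)α, and define F(q) := [h(q⋆p) − h(p)] − [h(q⋆p_W) − h(p_W)] (the difference of the mutual informations of the main BSC(p) channel and the wiretap BSC(p_W) channel under a Bernoulli(q) input). Then sup_{q∈[0,1]} F(q) = h(p_W) − h(p), and the supremum is attained at q = 1/2. In particular, the secrecy capacity of the BSC(p)/BSC(p_W) wiretap pair equals h(p_W) − h(p). -/
import Mathlib


/-- Binary entropy function (base 2): `h(x) = -x log₂ x - (1-x) log₂ (1-x)`,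
with the convention `h(0) = h(1) = 0` (since `Real.logb 2 0 = 0`). -/
noncomputable def binEnt (x : ℝ) : ℝ := -(x * Real.logb 2 x) - (1 - x) * Real.logb 2 (1 - x)

/-- Binary convolution: `q ⋆ α = q(1-α) + (1-q)α`. -/
def binConv (q α : ℝ) : ℝ := q * (1 - α) + (1 - q) * α

lemma binEnt_eq (x : ℝ) : binEnt x = Real.binEntropy x / Real.log 2 := by
  simp [binEnt, Real.binEntropy, Real.logb, Real.log_inv]
  ring

lemma binEntropy_fold {x : ℝ} (h0 : 0 ≤ x) (h1 : x ≤ 1) :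
    Real.binEntropy x = Real.binEntropy (2⁻¹ - |x - 2⁻¹|) := by
  rcases le_or_gt x 2⁻¹ with h | h
  · rw [abs_of_nonpos (by linarith)]; ring_nf
  · rw [abs_of_pos (by linarith), show (2:ℝ)⁻¹ - (x - 2⁻¹) = 1 - x by ring,
      Real.binEntropy_one_sub]

lemma binEntropy_le_of_abs {x y : ℝ} (hx0 : 0 ≤ x) (hx1 : x ≤ 1) (hy0 : 0 ≤ y) (hy1 : y ≤ 1)
    (h : |y - 2⁻¹| ≤ |x - 2⁻¹|) : Real.binEntropy x ≤ Real.binEntropy y := by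
  rw [binEntropy_fold hx0 hx1, binEntropy_fold hy0 hy1]
  have hax : |x - 2⁻¹| ≤ 2⁻¹ := abs_le.mpr ⟨by linarith, by linarith⟩
  have hay : |y - 2⁻¹| ≤ 2⁻¹ := abs_le.mpr ⟨by linarith, by linarith⟩
  exact Real.binEntropy_strictMonoOn.monotoneOn
    ⟨by linarith, by linarith [abs_nonneg (x - 2⁻¹)]⟩
    ⟨by linarith, by linarith [abs_nonneg (y - 2⁻¹)]⟩
    (by linarith)

/-- For `0 ≤ p < p_W < 1/2`, the function
`F(q) = [h(q⋆p) - h(p)] - [h(q⋆p_W) - h(p_W)]` (difference of the mutual informations of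
the main `BSC(p)` and wiretap `BSC(p_W)` channels under a `Bernoulli(q)` input) attains its
supremum over `q ∈ [0,1]` at `q = 1/2`, and the supremum equals `h(p_W) - h(p)`:
the secrecy capacity of the BSC wiretap pair. -/
theorem bsc_secrecy_capacity (p pW : ℝ) (hp : 0 ≤ p) (hppW : p < pW) (hpW : pW < 1 / 2)
    (F : ℝ → ℝ)
    (hF : ∀ q, F q = (binEnt (binConv q p) - binEnt p) - (binEnt (binConv q pW) - binEnt pW)) :
    IsGreatest (F '' Set.Icc 0 1) (binEnt pW - binEnt p) ∧
      F (1 / 2) = binEnt pW - binEnt p := by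
  have hFhalf : F (1 / 2) = binEnt pW - binEnt p := by
    rw [hF]
    have h1 : binConv (1/2) p = 1/2 := by unfold binConv; ring
    have h2 : binConv (1/2) pW = 1/2 := by unfold binConv; ring
    rw [h1, h2]; ring
  refine ⟨⟨⟨1/2, by norm_num, hFhalf⟩, ?_⟩, hFhalf⟩
  rintro z ⟨q, ⟨hq0, hq1⟩, rfl⟩
  rw [hF]
  have key : binEnt (binConv q p) ≤ binEnt (binConv q pW) := by
    rw [binEnt_eq, binEnt_eq]
    have hlog : 0 < Real.log 2 := Real.log_pos (by norm_num)
    have hent : Real.binEntropy (binConv q p) ≤ Real.binEntropy (binConv q pW) := by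
      apply binEntropy_le_of_abs
      · unfold binConv; nlinarith
      · unfold binConv; nlinarith
      · unfold binConv; nlinarith
      · unfold binConv; nlinarith
      · rw [show binConv q pW - 2⁻¹ = (q - 2⁻¹) * (1 - 2*pW) by unfold binConv; ring,
          show binConv q p - 2⁻¹ = (q - 2⁻¹) * (1 - 2*p) by unfold binConv; ring,
          abs_mul, abs_mul, abs_of_nonneg (by linarith : (0:ℝ) ≤ 1 - 2*pW),
          abs_of_nonneg (by linarith : (0:ℝ) ≤ 1 - 2*p)]
        exact mul_le_mul_of_nonneg_left (by linarith) (abs_nonneg _)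
    gcongr
  linarith
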